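/- For every q ∈ 𝔯⁺ with |q| ≥ 0.54, the function f_q is strictly convex on the interval [0, π/2]; indeed its second derivative satisfies f_q''(α) > 0 for all α ∈ [0, π/2]. -/

import Mathlib

open Matrix

set_option maxHeartbeats 1600000

noncomputable section

/-- Euclidean norm of a point of `ℝ²`. -/
def nrm (q : ℝ × ℝ) : ℝ := Real.sqrt (q.1 ^ 2 + q.2 ^ 2)

/-- Hill's region `𝔯`. -/
def HillRegion : Set (ℝ × ℝ) :=
  {q | (3:ℝ) ^ ((4:ℝ)/3) / 2 < 1 / nrm q + (3/2) * q.1 ^ 2 ∧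
       |q.1| < (3:ℝ) ^ (-(1:ℝ)/3) ∧ |q.2| < 2 * (3:ℝ) ^ (-(4:ℝ)/3)}

/-- The first quadrant part `𝔯⁺` of Hill's region. -/
def HillRegionPlus : Set (ℝ × ℝ) := {q ∈ HillRegion | 0 ≤ q.1 ∧ 0 ≤ q.2}

/-- The symmetric matrix `𝓗(q)`. -/
def Hmat (q : ℝ × ℝ) : Matrix (Fin 2) (Fin 2) ℝ :=
  (1 / (nrm q) ^ 5) •
    !![-2 * (nrm q) ^ 5 + (nrm q) ^ 2 - 3 * q.1 ^ 2, -3 * q.1 * q.2;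
       -3 * q.1 * q.2, (nrm q) ^ 5 + (nrm q) ^ 2 - 3 * q.2 ^ 2]

/-- The vector `w(q) = (q₂/|q|³, 3q₁ - q₁/|q|³)`. -/
def w (q : ℝ × ℝ) : Fin 2 → ℝ := ![q.2 / (nrm q) ^ 3, 3 * q.1 - q.1 / (nrm q) ^ 3]

/-- The radius `ρ(q) = √(3q₁² + 2/|q| - 3^{4/3})`. -/
def ρ (q : ℝ × ℝ) : ℝ := Real.sqrt (3 * q.1 ^ 2 + 2 / nrm q - (3:ℝ) ^ ((4:ℝ)/3))

/-- The function `f_q(α) = (w(q)+s)ᵀ 𝓗(q) (w(q)+s)` where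
`s = ρ(q)·(cos(θ+α), sin(θ+α))` and `θ` is the polar angle of `q`. -/
def fq (q : ℝ × ℝ) (θ : ℝ) (α : ℝ) : ℝ :=
  (w q + ρ q • ![Real.cos (θ + α), Real.sin (θ + α)]) ⬝ᵥ
    (Hmat q).mulVec (w q + ρ q • ![Real.cos (θ + α), Real.sin (θ + α)])


private lemma trigHasDeriv (θ e1 e2 e3 e4 e5 : ℝ) (α : ℝ) :
    HasDerivAt (fun a : ℝ => e1 * Real.cos (θ + a) + e2 * Real.sin (θ + a) +
        e3 * Real.cos (θ + a) ^ 2 + e4 * (Real.cos (θ + a) * Real.sin (θ + a)) +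
        e5 * Real.sin (θ + a) ^ 2)
      (e2 * Real.cos (θ + α) + -e1 * Real.sin (θ + α) + e4 * Real.cos (θ + α) ^ 2 +
        (2 * e5 - 2 * e3) * (Real.cos (θ + α) * Real.sin (θ + α)) +
        -e4 * Real.sin (θ + α) ^ 2) α := by
  have hb : HasDerivAt (fun a : ℝ => θ + a) 1 α := by
    simpa using (hasDerivAt_id α).const_add θ
  have hc : HasDerivAt (fun a : ℝ => Real.cos (θ + a)) (-Real.sin (θ + α)) α := by
    simpa using hb.cos
  have hs : HasDerivAt (fun a : ℝ => Real.sin (θ + a)) (Real.cos (θ + α)) α := by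
    simpa using hb.sin
  have h := ((((hc.const_mul e1).add (hs.const_mul e2)).add
      ((hc.pow 2).const_mul e3)).add ((hc.mul hs).const_mul e4)).add
      ((hs.pow 2).const_mul e5)
  refine h.congr_deriv ?_
  push_cast
  ring

private lemma deriv2_trig (f : ℝ → ℝ) (c k e1 e2 e3 e4 e5 θ : ℝ)
    (hf : f = fun a : ℝ => c + k * (e1 * Real.cos (θ + a) + e2 * Real.sin (θ + a) +
        e3 * Real.cos (θ + a) ^ 2 + e4 * (Real.cos (θ + a) * Real.sin (θ + a)) +
        e5 * Real.sin (θ + a) ^ 2)) :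
    Continuous f ∧ ∀ α : ℝ, deriv (deriv f) α =
      k * (-e1 * Real.cos (θ + α) + -e2 * Real.sin (θ + α) +
        (2 * e5 - 2 * e3) * (Real.cos (θ + α) ^ 2 - Real.sin (θ + α) ^ 2) +
        -(4 * e4) * (Real.cos (θ + α) * Real.sin (θ + α))) := by
  have hd1 : deriv f = fun α : ℝ => k * (e2 * Real.cos (θ + α) + -e1 * Real.sin (θ + α) +
      e4 * Real.cos (θ + α) ^ 2 + (2 * e5 - 2 * e3) * (Real.cos (θ + α) * Real.sin (θ + α)) +
      -e4 * Real.sin (θ + α) ^ 2) := by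
    funext α
    rw [hf]
    exact (((trigHasDeriv θ e1 e2 e3 e4 e5 α).const_mul k).const_add c).deriv
  constructor
  · rw [hf]; fun_prop
  · intro α
    rw [hd1, ((trigHasDeriv θ e2 (-e1) e4 (2 * e5 - 2 * e3) (-e4) α).const_mul k).deriv]
    ring

private lemma G_pos (r p a b w v : ℝ) (hr : 0 < r) (hp : 0 < p) (ha : 0 ≤ a) (hb : 0 ≤ b)
    (hsum : a ^ 2 + b ^ 2 = r ^ 2) (hkey : 3 * r ^ 2 * p < 1 - 3 * r ^ 3)
    (hw : 0 ≤ w) (hv : 0 ≤ v) (hwv : w ^ 2 + v ^ 2 = 1) :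
    0 < 3 * r * a * b * (3 - r ^ 3) * w + ((1 - 3 * r ^ 3) * (r ^ 3 + 1) + 3 * r ^ 4 * b ^ 2) * v +
      3 * p * (r ^ 3 * (a ^ 2 - b ^ 2) + r ^ 2) * (w ^ 2 - v ^ 2) -
      12 * p * r ^ 3 * a * b * (w * v) := by
  have h30 : 0 < 3 * r ^ 2 * p := by positivity
  have hr3 : 3 * r ^ 3 < 1 := by linarith
  have hr1 : r ^ 3 < 1 := by linarith [pow_pos hr 3]
  have hv1 : v ≤ 1 := by nlinarith [sq_nonneg w]
  have hb2 : b ^ 2 ≤ r ^ 2 := by nlinarith [sq_nonneg a]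
  have ha2 : a ^ 2 ≤ r ^ 2 := by nlinarith [sq_nonneg b]
  have hab : 0 ≤ a * b := mul_nonneg ha hb
  have hDlow : 3 * r ^ 2 * (1 - r ^ 3) ≤ 3 * (r ^ 3 * (a ^ 2 - b ^ 2) + r ^ 2) := by
    nlinarith [mul_nonneg (pow_pos hr 3).le (show 0 ≤ a ^ 2 - b ^ 2 + r ^ 2 by nlinarith [sq_nonneg a])]
  have hDpos : 0 < 3 * (r ^ 3 * (a ^ 2 - b ^ 2) + r ^ 2) := by
    nlinarith [mul_pos (mul_pos (show (0:ℝ) < 3 by norm_num) (pow_pos hr 2)) (show (0:ℝ) < 1 - r ^ 3 by linarith)]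
  have hDup : 3 * (r ^ 3 * (a ^ 2 - b ^ 2) + r ^ 2) ≤ 3 * r ^ 2 * (1 + r ^ 3) := by
    nlinarith [mul_nonneg (pow_pos hr 3).le (show 0 ≤ r ^ 2 - (a ^ 2 - b ^ 2) by nlinarith [sq_nonneg b])]
  have hGv : p * (3 * (r ^ 3 * (a ^ 2 - b ^ 2) + r ^ 2)) <
      (1 - 3 * r ^ 3) * (r ^ 3 + 1) + 3 * r ^ 4 * b ^ 2 := by
    have h1 : p * (3 * (r ^ 3 * (a ^ 2 - b ^ 2) + r ^ 2)) ≤ 3 * r ^ 2 * p * (1 + r ^ 3) := by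
      nlinarith [mul_le_mul_of_nonneg_left hDup hp.le]
    have h2 : 3 * r ^ 2 * p * (1 + r ^ 3) < (1 - 3 * r ^ 3) * (1 + r ^ 3) := by
      nlinarith [pow_pos hr 3]
    nlinarith [mul_nonneg (pow_pos hr 4).le (sq_nonneg b)]
  have hF0E : 12 * p * r ^ 3 * a * b ≤ 3 * r * a * b * (3 - r ^ 3) := by
    have h12 : 12 * r ^ 2 * p ≤ 3 * (3 - r ^ 3) := by nlinarith [pow_pos hr 3]
    nlinarith [mul_nonneg (mul_nonneg hr.le ha) hb, h12,
      mul_nonneg (mul_nonneg (mul_nonneg hr.le ha) hb) (show 0 ≤ 3 * (3 - r ^ 3) - 12 * r ^ 2 * p by linarith)]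
  by_cases hv0 : v = 0
  · have hw2 : w ^ 2 = 1 := by rw [hv0] at hwv; simpa using hwv
    have hfac : (w - 1) * (w + 1) = 0 := by linear_combination hw2
    have hwone : w = 1 := by
      rcases mul_eq_zero.mp hfac with h | h
      · linarith
      · linarith
    rw [hv0, hwone]
    nlinarith [mul_pos hp hDpos, mul_nonneg (mul_nonneg (mul_nonneg hr.le ha) hb)
      (show 0 ≤ 3 - r ^ 3 by linarith)]
  · have hvpos : 0 < v := lt_of_le_of_ne hv (Ne.symm hv0)
    nlinarith [mul_nonneg (mul_pos hp hDpos).le (sq_nonneg w),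
      mul_nonneg (sub_nonneg.mpr hF0E) hw,
      mul_pos (sub_pos.mpr hGv) hvpos,
      mul_nonneg (mul_pos hp hDpos).le (mul_nonneg hv (show 0 ≤ 1 - v by linarith)),
      mul_nonneg (mul_nonneg (mul_nonneg (mul_nonneg (mul_nonneg
        (show (0:ℝ) ≤ 12 by norm_num) hp.le) (pow_pos hr 3).le) ha) hb)
        (mul_nonneg hw (show 0 ≤ 1 - v by linarith))]

/-- For `q ∈ 𝔯⁺` with `|q| ≥ 0.54` and polar angle `θ ∈ [0, π/2]`, the function `f_q`
is strictly convex on `[0, π/2]`, and indeed `f_q''(α) > 0` for all `α ∈ [0, π/2]`. -/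
theorem fq_strictly_convex (q : ℝ × ℝ) (hq : q ∈ HillRegionPlus)
    (hr : 0.54 ≤ nrm q) (θ : ℝ) (hθ : θ ∈ Set.Icc (0:ℝ) (Real.pi / 2))
    (hq1 : q.1 = nrm q * Real.cos θ) (hq2 : q.2 = nrm q * Real.sin θ) :
    StrictConvexOn ℝ (Set.Icc 0 (Real.pi / 2)) (fq q θ) ∧
    ∀ α ∈ Set.Icc (0:ℝ) (Real.pi / 2), 0 < deriv (deriv (fq q θ)) α := by
  obtain ⟨hqH, hq1pos, hq2pos⟩ := hq
  obtain ⟨hHill, hq1abs, hq2abs⟩ := hqH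
  have hr0 : (0:ℝ) < nrm q := lt_of_lt_of_le (by norm_num) hr
  have hrne : nrm q ≠ 0 := ne_of_gt hr0
  have hrsq : q.1 ^ 2 + q.2 ^ 2 = nrm q ^ 2 := by
    rw [nrm, Real.sq_sqrt (by positivity)]
  have h21 : 2 / nrm q = 2 * (1 / nrm q) := by ring
  have hρin : 0 < 3 * q.1 ^ 2 + 2 / nrm q - (3:ℝ) ^ ((4:ℝ)/3) := by linarith
  have hρsq : ρ q ^ 2 = 3 * q.1 ^ 2 + 2 / nrm q - (3:ℝ) ^ ((4:ℝ)/3) := by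
    rw [ρ, Real.sq_sqrt hρin.le]
  have hρpos : 0 < ρ q := by rw [ρ]; exact Real.sqrt_pos.mpr hρin
  set κ : ℝ := (3:ℝ) ^ ((1:ℝ)/3) with hκdef
  have hκpos : (0:ℝ) < κ := Real.rpow_pos_of_pos (by norm_num) _
  have hκ3 : κ ^ 3 = 3 := by
    rw [hκdef, ← Real.rpow_natCast ((3:ℝ) ^ ((1:ℝ)/3)) 3, ← Real.rpow_mul (by norm_num)]
    norm_num
  have hE43 : (3:ℝ) ^ ((4:ℝ)/3) = 3 * κ := by
    rw [hκdef, show (4:ℝ)/3 = 1 + 1/3 by norm_num, Real.rpow_add (by norm_num), Real.rpow_one]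
  have h13 : (3:ℝ) ^ (-(1:ℝ)/3) = κ ^ 2 / 3 := by
    rw [hκdef, show -(1:ℝ)/3 = 2/3 - 1 by norm_num, Real.rpow_sub (by norm_num), Real.rpow_one]
    congr 1
    rw [← Real.rpow_natCast ((3:ℝ) ^ ((1:ℝ)/3)) 2, ← Real.rpow_mul (by norm_num)]
    norm_num
  have hq1lt : q.1 < κ ^ 2 / 3 := by
    rw [h13] at hq1abs
    calc q.1 ≤ |q.1| := le_abs_self q.1
    _ < κ ^ 2 / 3 := hq1abs
  have hq1sq : 3 * q.1 ^ 2 < κ := by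
    have h1 : q.1 ^ 2 < (κ ^ 2 / 3) ^ 2 := by nlinarith
    nlinarith [hκ3, hκpos]
  have hκr : κ * nrm q < 1 := by
    have h0 : 2 * κ < 2 / nrm q := by rw [hE43] at hρin; linarith
    have h1 : κ < 1 / nrm q := by linarith
    exact (lt_div_iff₀ hr0).mp h1
  have h3r3 : 3 * nrm q ^ 3 < 1 := by
    have hκrnn : 0 ≤ κ * nrm q := by positivity
    have h3 : (κ * nrm q) ^ 3 < 1 := by nlinarith [sq_nonneg (κ * nrm q)]
    have h4 : κ ^ 3 * nrm q ^ 3 = 3 * nrm q ^ 3 := by rw [hκ3]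
    nlinarith [h3, h4]
  have hsplit : 9 * nrm q ^ 4 * (3 * nrm q ^ 2 + 2 / nrm q - 3 * κ) =
      27 * nrm q ^ 6 - 27 * κ * nrm q ^ 4 + 18 * nrm q ^ 3 := by
    field_simp
    ring
  have hfac : (1 - 3 * nrm q ^ 3) ^ 2 - (27 * nrm q ^ 6 - 27 * κ * nrm q ^ 4 + 18 * nrm q ^ 3) =
      (1 - κ * nrm q) ^ 3 * (6 * nrm q ^ 3 + 6 * κ ^ 2 * nrm q ^ 2 + 3 * κ * nrm q + 1) := by
    linear_combination (10 * nrm q ^ 3 - 15 * κ * nrm q ^ 4 + 6 * κ ^ 2 * nrm q ^ 5 + 6 * nrm q ^ 6) * hκ3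
  have hpos1 : 0 < (1 - κ * nrm q) ^ 3 * (6 * nrm q ^ 3 + 6 * κ ^ 2 * nrm q ^ 2 + 3 * κ * nrm q + 1) :=
    mul_pos (pow_pos (by linarith) 3) (by positivity)
  have hpoly : 9 * nrm q ^ 4 * (3 * nrm q ^ 2 + 2 / nrm q - 3 * κ) < (1 - 3 * nrm q ^ 3) ^ 2 := by
    rw [hsplit]; linarith
  have hρle : ρ q ^ 2 ≤ 3 * nrm q ^ 2 + 2 / nrm q - 3 * κ := by
    rw [hρsq, hE43]; nlinarith [sq_nonneg q.2]
  have h9 : (3 * nrm q ^ 2 * ρ q) ^ 2 < (1 - 3 * nrm q ^ 3) ^ 2 := by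
    nlinarith [hpoly, hρle, pow_pos hr0 4]
  have hkey : 3 * nrm q ^ 2 * ρ q < 1 - 3 * nrm q ^ 3 := by
    nlinarith [h9, mul_pos (mul_pos (show (0:ℝ) < 3 by norm_num) (pow_pos hr0 2)) hρpos]
  have hcosθ : Real.cos θ = q.1 / nrm q := by rw [hq1]; field_simp
  have hsinθ : Real.sin θ = q.2 / nrm q := by rw [hq2]; field_simp
  have hinv : nrm q * (nrm q)⁻¹ = 1 := mul_inv_cancel₀ hrne
  have hfq : fq q θ = fun a : ℝ => (w q ⬝ᵥ (Hmat q).mulVec (w q)) + (1/(nrm q)^6) * ((2 * ρ q * q.2 * (1 - 2 * (nrm q)^3 - 9 * (nrm q) * q.1^2)) * Real.cos (θ + a) + (2 * ρ q * q.1 * ((3 * (nrm q)^3 - 1) * ((nrm q)^3 + 1) - 9 * (nrm q) * q.2^2)) * Real.sin (θ + a) + (ρ q^2 * (nrm q) * (-2 * (nrm q)^5 + (nrm q)^2 - 3 * q.1^2)) * Real.cos (θ + a) ^ 2 + (-6 * ρ q^2 * (nrm q) * q.1 * q.2) * (Real.cos (θ + a) * Real.sin (θ + a)) + (ρ q^2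 * (nrm q) * ((nrm q)^5 + (nrm q)^2 - 3 * q.2^2)) * Real.sin (θ + a) ^ 2) := by
    funext a
    simp only [fq, Hmat, w, Matrix.mulVec, dotProduct, Fin.sum_univ_two,
      Matrix.smul_apply, Matrix.cons_val', Matrix.cons_val_zero, Matrix.cons_val_one,
      Matrix.head_cons, Matrix.head_fin_const, Matrix.empty_val', Matrix.cons_val_fin_one,
      Pi.add_apply, Pi.smul_apply, smul_eq_mul, Matrix.cons_val_zero, Matrix.cons_val_one, Matrix.of_apply]
    field_simp
    ring
  obtain ⟨hcont, hd2⟩ := deriv2_trig (fq q θ) (w q ⬝ᵥ (Hmat q).mulVec (w q)) (1/(nrm q)^6) (2 * ρ q * q.2 * (1 - 2 * (nrm q)^3 - 9 * (nrm q) * q.1^2)) (2 * ρ q * q.1 * ((3 * (nrm q)^3 - 1) * ((nrm q)^3 + 1) - 9 * (nrm q) * q.2^2)) (ρ q^2 * (nrm q) * (-2 * (nrm q)^5 + (nrm q)^2 - 3 * q.1^2)) (-6 * ρ q^2 * (nrm q) * q.1 * q.2) (ρ q^2 * (nrm q) * ((nrm q)^5 + (nrm q)^2 - 3 * q.2^2))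 θ hfq
  have main : ∀ α ∈ Set.Icc (0:ℝ) (Real.pi / 2), 0 < deriv (deriv (fq q θ)) α := by
    intro α hα
    obtain ⟨hα0, hα2⟩ := hα
    have hw : 0 ≤ Real.cos α :=
      Real.cos_nonneg_of_mem_Icc (Set.mem_Icc.mpr ⟨by linarith [Real.pi_pos], hα2⟩)
    have hv : 0 ≤ Real.sin α :=
      Real.sin_nonneg_of_nonneg_of_le_pi hα0 (by linarith [Real.pi_pos])
    have hwv : Real.cos α ^ 2 + Real.sin α ^ 2 = 1 := Real.cos_sq_add_sin_sq α
    have hca : Real.cos (θ + α) = q.1 / nrm q * Real.cos α - q.2 / nrm q * Real.sin α := by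
      rw [Real.cos_add, hcosθ, hsinθ]
    have hsa : Real.sin (θ + α) = q.2 / nrm q * Real.cos α + q.1 / nrm q * Real.sin α := by
      rw [Real.sin_add, hcosθ, hsinθ]
    have hG := G_pos (nrm q) (ρ q) q.1 q.2 (Real.cos α) (Real.sin α)
      hr0 hρpos hq1pos hq2pos hrsq hkey hw hv hwv
    rw [hd2 α]
    refine mul_pos (by positivity) ?_
    have key : -(2 * ρ q * q.2 * (1 - 2 * (nrm q)^3 - 9 * (nrm q) * q.1^2)) * Real.cos (θ + α) + -(2 * ρ q * q.1 * ((3 * (nrm q)^3 - 1) * ((nrm q)^3 + 1) - 9 * (nrm q) * q.2^2)) * Real.sin (θ + α) + (2 * (ρ q^2 * (nrm q) * ((nrm q)^5 + (nrm q)^2 - 3 * q.2^2)) - 2 * (ρ q^2 * (nrm q) * (-2 * (nrm q)^5 + (nrm q)^2 - 3 * q.1^2))) * (Real.cos (θ + α) ^ 2 - Real.sin (θ + α) ^ 2) + -(4 * (-6 * ρ q^2 * (nrm q) * q.1 * q.2)) * (Real.cos (θ + α) * Real.sin (θ + α)) = 2 * ρ q * nrm q * (3 * nrm q * q.1 * q.2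 * (3 - nrm q ^ 3) * Real.cos α + ((1 - 3 * nrm q ^ 3) * (nrm q ^ 3 + 1) + 3 * nrm q ^ 4 * q.2 ^ 2) * Real.sin α + 3 * ρ q * (nrm q ^ 3 * (q.1 ^ 2 - q.2 ^ 2) + nrm q ^ 2) * (Real.cos α ^ 2 - Real.sin α ^ 2) - 12 * ρ q * nrm q ^ 3 * q.1 * q.2 * (Real.cos α * Real.sin α)) := by
      linear_combination ((6:ℝ) * (nrm q)^6 * (ρ q)^2 * (Real.cos (θ + α)) + (-2:ℝ) * q.2 * (ρ q) + (4:ℝ) * q.2 * (nrm q)^3 * (ρ q) + (-6:ℝ) * q.2 * (nrm q)^6 * (nrm q)⁻¹ * (ρ q)^2 * (Real.sin α) + (-6:ℝ) * q.2^2 * (nrm q) * (ρ q)^2 * (Real.cos (θ + α)) + (6:ℝ) * q.2^3 * (nrm q) * (nrm q)⁻¹ * (ρ q)^2 * (Real.sin α) + (6:ℝ) * q.1 * (nrm q)^6 * (nrm q)⁻¹ * (ρ q)^2 * (Real.cos α) + (24:ℝ) * q.1 * q.2 * (nrm q) * (ρ q)^2 * (Real.sin (θ + α)) + (-6:ℝ)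 * q.1 * q.2^2 * (nrm q) * (nrm q)⁻¹ * (ρ q)^2 * (Real.cos α) + (6:ℝ) * q.1^2 * (nrm q) * (ρ q)^2 * (Real.cos (θ + α)) + (18:ℝ) * q.1^2 * q.2 * (nrm q) * (ρ q) + (-6:ℝ) * q.1^2 * q.2 * (nrm q) * (nrm q)⁻¹ * (ρ q)^2 * (Real.sin α) + (6:ℝ) * q.1^3 * (nrm q) * (nrm q)⁻¹ * (ρ q)^2 * (Real.cos α)) * hca + ((-6:ℝ) * (nrm q)^6 * (ρ q)^2 * (Real.sin (θ + α)) + (-6:ℝ) * q.2 * (nrm q)^6 * (nrm q)⁻¹ * (ρ q)^2 * (Real.cos α) + (6:ℝ) * q.2^2 * (nrm q) * (ρ q)^2 * (Real.sin (θ + α)) + (6:ℝ) * q.2^3 * (nrm q) * (nrm q)⁻¹ * (ρ q)^2 * (Real.cos α) + (2:ℝ) * q.1 * (ρ q) + (-4:ℝ) * q.1 * (nrm q)^3 * (ρ q) + (-6:ℝ) * q.1 * (nrm q)^6 * (ρ q) + (-6:ℝ) * q.1 * (nrm q)^6 * (nrm q)⁻¹ * (ρ q)^2 * (Real.sin α)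 + (18:ℝ) * q.1 * q.2^2 * (nrm q) * (ρ q) + (-18:ℝ) * q.1 * q.2^2 * (nrm q) * (nrm q)⁻¹ * (ρ q)^2 * (Real.sin α) + (-6:ℝ) * q.1^2 * (nrm q) * (ρ q)^2 * (Real.sin (θ + α)) + (18:ℝ) * q.1^2 * q.2 * (nrm q) * (nrm q)⁻¹ * (ρ q)^2 * (Real.cos α) + (-6:ℝ) * q.1^3 * (nrm q) * (nrm q)⁻¹ * (ρ q)^2 * (Real.sin α)) * hsa + ((2:ℝ) * (nrm q) * (ρ q) * (Real.sin α) + (-6:ℝ) * (nrm q)^3 * (ρ q)^2 * (Real.sin α)^2 + (6:ℝ) * (nrm q)^3 * (ρ q)^2 * (Real.cos α)^2 + (-4:ℝ) * q.2^2 * (nrm q)^2 * (ρ q) * (Real.sin α) + (6:ℝ) * q.2^2 * (nrm q)^4 * (ρ q)^2 * (Real.sin α)^2 + (-6:ℝ) * q.2^2 * (nrm q)^4 * (ρ q)^2 * (Real.cos α)^2 + (6:ℝ) * q.2^2 * (nrm q)^5 * (nrm q)⁻¹ * (ρ q)^2 * (Real.sin α)^2 + (-6:ℝ) * q.2^2 *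 (nrm q)^5 * (nrm q)⁻¹ * (ρ q)^2 * (Real.cos α)^2 + (-6:ℝ) * q.2^4 * (nrm q)⁻¹ * (ρ q)^2 * (Real.sin α)^2 + (6:ℝ) * q.2^4 * (nrm q)⁻¹ * (ρ q)^2 * (Real.cos α)^2 + (-24:ℝ) * q.1 * q.2 * (nrm q)^4 * (ρ q)^2 * (Real.cos α) * (Real.sin α) + (-6:ℝ) * q.1 * q.2 * (nrm q)^5 * (ρ q) * (Real.cos α) + (-24:ℝ) * q.1 * q.2 * (nrm q)^5 * (nrm q)⁻¹ * (ρ q)^2 * (Real.cos α) * (Real.sin α) + (18:ℝ) * q.1 * q.2^3 * (ρ q) * (Real.cos α) + (-4:ℝ) * q.1^2 * (nrm q)^2 * (ρ q) * (Real.sin α) + (-6:ℝ) * q.1^2 * (nrm q)^4 * (ρ q)^2 * (Real.sin α)^2 + (6:ℝ) * q.1^2 * (nrm q)^4 * (ρ q)^2 * (Real.cos α)^2 + (-6:ℝ) * q.1^2 * (nrm q)^5 * (ρ q) * (Real.sin α) + (-6:ℝ) * q.1^2 * (nrm q)^5 * (nrm q)⁻¹ * (ρ q)^2 * (Real.sin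 α)^2 + (6:ℝ) * q.1^2 * (nrm q)^5 * (nrm q)⁻¹ * (ρ q)^2 * (Real.cos α)^2 + (-12:ℝ) * q.1^2 * q.2^2 * (nrm q)⁻¹ * (ρ q)^2 * (Real.sin α)^2 + (12:ℝ) * q.1^2 * q.2^2 * (nrm q)⁻¹ * (ρ q)^2 * (Real.cos α)^2 + (18:ℝ) * q.1^3 * q.2 * (ρ q) * (Real.cos α) + (-6:ℝ) * q.1^4 * (nrm q)⁻¹ * (ρ q)^2 * (Real.sin α)^2 + (6:ℝ) * q.1^4 * (nrm q)⁻¹ * (ρ q)^2 * (Real.cos α)^2) * hinv + ((2:ℝ) * (nrm q)⁻¹ * (ρ q) * (Real.sin α) + (-4:ℝ) * (nrm q)^2 * (ρ q) * (Real.sin α) + (-6:ℝ) * (nrm q)^2 * (nrm q)⁻¹ * (ρ q)^2 * (Real.sin α)^2 + (6:ℝ) * (nrm q)^2 * (nrm q)⁻¹ * (ρ q)^2 * (Real.cos α)^2 + (-6:ℝ) * (nrm q)^5 * (ρ q) * (Real.sin α) + (-6:ℝ) * q.2^2 * (nrm q)⁻¹ * (ρ q)^2 * (Real.sin α)^2 +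 (6:ℝ) * q.2^2 * (nrm q)⁻¹ * (ρ q)^2 * (Real.cos α)^2 + (18:ℝ) * q.1 * q.2 * (ρ q) * (Real.cos α) + (-6:ℝ) * q.1^2 * (nrm q)⁻¹ * (ρ q)^2 * (Real.sin α)^2 + (6:ℝ) * q.1^2 * (nrm q)⁻¹ * (ρ q)^2 * (Real.cos α)^2) * hrsq
    rw [key]
    exact mul_pos (mul_pos (mul_pos (by norm_num) hρpos) hr0) hG
  refine ⟨?_, main⟩
  apply strictConvexOn_of_deriv2_pos (convex_Icc _ _) (hcont.continuousOn)
  intro x hx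
  rw [interior_Icc] at hx
  rw [show deriv^[2] (fq q θ) = deriv (deriv (fq q θ)) by
    rw [Function.iterate_succ_apply', Function.iterate_one]]
  exact main x (Set.Ioo_subset_Icc_self hx)

end
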